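/- Let φ: ℝ → ℝ with φ(x) = 1 + cos(2πx) for |x| ≤ 1/2 and φ(x) = 0 otherwise, and for τ > 0 let ψ_τ: ℝ → ℝ be defined by ψ_τ(x) = (1+τ)^{−1/2}[4π²(1+τ)(φ*φ)(x/√(1+τ)) + (φ*φ)''(x/√(1+τ))], where * denotes convolution. Then ψ_τ is continuous, ψ_τ(x) ≥ 0 for all x ∈ ℝ, and its support is contained in the closed interval [−√(1+τ), √(1+τ)]. -/

import Mathlib

open scoped FourierTransform Real
open MeasureTheory

/-- The raised-cosine bump `φ(x) = 1 + cos(2πx)` on `[-1/2, 1/2]`, zero elsewhere. -/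
noncomputable def raisedCos : ℝ → ℝ :=
  fun x => if |x| ≤ 1/2 then 1 + Real.cos (2 * π * x) else 0

/-- The autocorrelation `φ * φ` (convolution over ℝ with respect to Lebesgue measure). -/
noncomputable def raisedCosConv : ℝ → ℝ :=
  MeasureTheory.convolution raisedCos raisedCos (ContinuousLinearMap.lsmul ℝ ℝ)
    MeasureTheory.volume

/-- The univariate admissible function
`ψ_τ(x) = (1+τ)^{−1/2} [4π²(1+τ)(φ*φ)(x/√(1+τ)) + (φ*φ)''(x/√(1+τ))]`. -/
noncomputable def psiAdm (τ : ℝ) : ℝ → ℝ := fun x =>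
  (Real.sqrt (1 + τ))⁻¹ *
    (4 * π ^ 2 * (1 + τ) * raisedCosConv (x / Real.sqrt (1 + τ)) +
      deriv (deriv raisedCosConv) (x / Real.sqrt (1 + τ)))

noncomputable def phiD : ℝ → ℝ :=
  fun x => if |x| ≤ 1/2 then -(2 * π * Real.sin (2 * π * x)) else 0

lemma raisedCos_nonneg (x : ℝ) : 0 ≤ raisedCos x := by
  unfold raisedCos
  split
  · nlinarith [Real.neg_one_le_cos (2 * π * x)]
  · exact le_rfl

lemma raisedCos_eq_zero {x : ℝ} (h : ¬ |x| ≤ 1/2) : raisedCos x = 0 := if_neg h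
lemma phiD_eq_zero {x : ℝ} (h : ¬ |x| ≤ 1/2) : phiD x = 0 := if_neg h

lemma abs_half_cases {x : ℝ} (h : |x| = 1/2) : x = 1/2 ∨ x = -(1/2) :=
  abs_eq (by norm_num : (0:ℝ) ≤ 1/2) |>.1 h

lemma raisedCos_boundary {x : ℝ} (h : |x| = 1/2) : 1 + Real.cos (2 * π * x) = 0 := by
  rcases abs_half_cases h with rfl | rfl
  · rw [show 2 * π * (1/2 : ℝ) = π by ring, Real.cos_pi]; ring
  · rw [show 2 * π * (-(1/2) : ℝ) = -π by ring, Real.cos_neg, Real.cos_pi]; ring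

lemma phiD_boundary {x : ℝ} (h : |x| = 1/2) : -(2 * π * Real.sin (2 * π * x)) = 0 := by
  rcases abs_half_cases h with rfl | rfl
  · rw [show 2 * π * (1/2 : ℝ) = π by ring, Real.sin_pi]; ring
  · rw [show 2 * π * (-(1/2) : ℝ) = -π by ring, Real.sin_neg, Real.sin_pi]; ring

lemma raisedCos_cont : Continuous raisedCos := by
  unfold raisedCos
  refine Continuous.if_le ?_ continuous_const continuous_abs continuous_const ?_
  · exact continuous_const.add (Real.continuous_cos.comp (continuous_const.mul continuous_id))
  · exact fun x hx => raisedCos_boundary hx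

lemma phiD_cont : Continuous phiD := by
  unfold phiD
  refine Continuous.if_le ?_ continuous_const continuous_abs continuous_const ?_
  · exact ((continuous_const.mul (Real.continuous_sin.comp
      (continuous_const.mul continuous_id)))).neg
  · exact fun x hx => phiD_boundary hx

lemma raisedCos_sq_bound {c : ℝ} (hc : |c| = 1/2) (hb : 1 + Real.cos (2*π*c) = 0) :
    ∀ y : ℝ, raisedCos y ≤ 2 * π^2 * (y - c)^2 := by
  intro y
  unfold raisedCos
  split
  ·
    -- use cos u ≥ 1 - u²/2 with u = 2πy - 2πc ∓ π
    rcases abs_half_cases hc with rfl | rfl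
    · have h1 : Real.cos (2*π*y - π) = -Real.cos (2*π*y) := by
        rw [Real.cos_sub, Real.cos_pi, Real.sin_pi]; ring
      have h2 := Real.one_sub_sq_div_two_le_cos (x := 2*π*y - π)
      nlinarith [sq_nonneg (y - 1/2)]
    · have h1 : Real.cos (2*π*y + π) = -Real.cos (2*π*y) := by
        rw [Real.cos_add, Real.cos_pi, Real.sin_pi]; ring
      have h2 := Real.one_sub_sq_div_two_le_cos (x := 2*π*y + π)
      nlinarith [sq_nonneg (y + 1/2)]
  · positivity

lemma hasDerivAt_inner (x : ℝ) :
    HasDerivAt (fun y => 1 + Real.cos (2 * π * y)) (-(2 * π * Real.sin (2 * π * x))) x := by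
  have h0 : HasDerivAt (fun y : ℝ => 2 * π * y) (2 * π) x := by
    simpa using (hasDerivAt_id x).const_mul (2 * π)
  have := (h0.cos).const_add 1
  exact this.congr_deriv (by ring)

lemma raisedCos_hasDerivAt (x : ℝ) : HasDerivAt raisedCos (phiD x) x := by
  rcases lt_trichotomy |x| (1/2) with h | h | h
  · have hev : raisedCos =ᶠ[nhds x] fun y => 1 + Real.cos (2 * π * y) := by
      have hopen : IsOpen {y : ℝ | |y| < 1/2} := isOpen_lt continuous_abs continuous_const
      filter_upwards [hopen.mem_nhds h] with y hy
      exact if_pos (le_of_lt hy)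
    rw [show phiD x = -(2 * π * Real.sin (2 * π * x)) from if_pos h.le]
    exact (hasDerivAt_inner x).congr_of_eventuallyEq hev
  · -- boundary
    have hb : 1 + Real.cos (2*π*x) = 0 := raisedCos_boundary h
    have hx0 : raisedCos x = 0 := by unfold raisedCos; rw [if_pos h.le, hb]
    rw [show phiD x = 0 by rw [show phiD x = -(2 * π * Real.sin (2 * π * x)) from if_pos h.le,
      phiD_boundary h]]
    rw [hasDerivAt_iff_isLittleO]
    simp only [hx0, smul_zero, sub_zero]
    have hbd := raisedCos_sq_bound h hb
    have h1 : (fun y => raisedCos y) =O[nhds x] fun y => (y - x)^2 := by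
      refine Asymptotics.IsBigO.of_bound (2 * π^2) ?_
      filter_upwards with y
      rw [Real.norm_eq_abs, Real.norm_eq_abs, abs_of_nonneg (raisedCos_nonneg y),
        abs_of_nonneg (sq_nonneg _)]
      exact hbd y
    have h2 : (fun y : ℝ => (y - x)^2) =o[nhds x] fun y => y - x := by
      rw [Asymptotics.isLittleO_iff]
      intro c hc
      filter_upwards [eventually_abs_sub_lt x hc] with y hy
      rw [Real.norm_eq_abs, Real.norm_eq_abs]
      calc |(y - x)^2| = |y - x| * |y - x| := by rw [sq, abs_mul]
        _ ≤ c * |y - x| := by nlinarith [abs_nonneg (y - x)]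
    exact h1.trans_isLittleO h2
  · have hev : raisedCos =ᶠ[nhds x] fun _ => (0:ℝ) := by
      have hopen : IsOpen {y : ℝ | 1/2 < |y|} := isOpen_lt continuous_const continuous_abs
      filter_upwards [hopen.mem_nhds h] with y hy
      exact if_neg (not_le.2 hy)
    rw [show phiD x = 0 from if_neg (not_le.2 h)]
    exact (hasDerivAt_const x (0:ℝ)).congr_of_eventuallyEq hev

lemma raisedCos_deriv : deriv raisedCos = phiD :=
  funext fun x => (raisedCos_hasDerivAt x).deriv

lemma raisedCos_contDiff : ContDiff ℝ 1 raisedCos :=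
  contDiff_one_iff_deriv.2 ⟨fun x => (raisedCos_hasDerivAt x).differentiableAt,
    raisedCos_deriv ▸ phiD_cont⟩

lemma raisedCos_compactSupport : HasCompactSupport raisedCos :=
  HasCompactSupport.intro (isCompact_Icc (a := -(1/2:ℝ)) (b := 1/2)) fun x hx => by
    refine raisedCos_eq_zero fun hc => hx ?_
    exact ⟨neg_le_of_abs_le hc, le_of_abs_le hc⟩

lemma phiD_compactSupport : HasCompactSupport phiD :=
  HasCompactSupport.intro (isCompact_Icc (a := -(1/2:ℝ)) (b := 1/2)) fun x hx => by
    refine phiD_eq_zero fun hc => hx ?_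
    exact ⟨neg_le_of_abs_le hc, le_of_abs_le hc⟩

noncomputable def convD : ℝ → ℝ :=
  MeasureTheory.convolution phiD phiD (ContinuousLinearMap.lsmul ℝ ℝ)
    MeasureTheory.volume

lemma conv_eq_integral (f g : ℝ → ℝ) (x : ℝ) :
    MeasureTheory.convolution f g (ContinuousLinearMap.lsmul ℝ ℝ) MeasureTheory.volume x
      = ∫ t, f t * g (x - t) := by
  rw [MeasureTheory.convolution_def]
  simp [ContinuousLinearMap.lsmul_apply, smul_eq_mul]

lemma aux_integrable {f g : ℝ → ℝ} (hf : Continuous f) (hg : Continuous g)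
    (hcf : HasCompactSupport f) (x : ℝ) :
    Integrable (fun t => f t * g (x - t)) := by
  refine Continuous.integrable_of_hasCompactSupport
    (hf.mul (hg.comp (continuous_const.sub continuous_id))) ?_
  exact hcf.mul_right

noncomputable def Kfun (x : ℝ) : ℝ :=
  ∫ t, (4 * π^2 * (raisedCos t * raisedCos (x - t)) + phiD t * phiD (x - t))

lemma K_eq (x : ℝ) : 4 * π^2 * raisedCosConv x + convD x = Kfun x := by
  unfold raisedCosConv convD Kfun
  rw [conv_eq_integral, conv_eq_integral, ← MeasureTheory.integral_const_mul,
    ← MeasureTheory.integral_add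
      ((aux_integrable raisedCos_cont raisedCos_cont raisedCos_compactSupport x).const_mul _)
      (aux_integrable phiD_cont phiD_cont phiD_compactSupport x)]

lemma factors_vanish {x : ℝ} (hx : 1 < |x|) (t : ℝ) :
    raisedCos t * raisedCos (x - t) = 0 ∧ phiD t * phiD (x - t) = 0 := by
  by_cases h : |t| ≤ 1/2
  · have h2 : ¬ |x - t| ≤ 1/2 := by
      intro hc
      have : |x| ≤ |x - t| + |t| := by
        calc |x| = |(x - t) + t| := by ring_nf
          _ ≤ |x - t| + |t| := abs_add_le _ _
      linarith
    rw [raisedCos_eq_zero h2, phiD_eq_zero h2, mul_zero, mul_zero]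
    exact ⟨rfl, rfl⟩
  · rw [raisedCos_eq_zero h, phiD_eq_zero h, zero_mul, zero_mul]
    exact ⟨rfl, rfl⟩

lemma conv_vanish {x : ℝ} (hx : 1 < |x|) :
    raisedCosConv x = 0 ∧ convD x = 0 := by
  constructor
  · rw [raisedCosConv, conv_eq_integral]
    rw [show (fun t => raisedCos t * raisedCos (x - t)) = fun _ => (0:ℝ) from
      funext fun t => (factors_vanish hx t).1]
    exact MeasureTheory.integral_zero _ _
  · rw [convD, conv_eq_integral]
    rw [show (fun t => phiD t * phiD (x - t)) = fun _ => (0:ℝ) from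
      funext fun t => (factors_vanish hx t).2]
    exact MeasureTheory.integral_zero _ _

lemma raisedCosConv_nonneg (x : ℝ) : 0 ≤ raisedCosConv x := by
  rw [raisedCosConv, conv_eq_integral]
  exact MeasureTheory.integral_nonneg fun t =>
    mul_nonneg (raisedCos_nonneg t) (raisedCos_nonneg (x - t))

lemma K_formula {x : ℝ} (h0 : 0 ≤ x) (h1ated : x ≤ 1) :
    Kfun x = 4 * π^2 * (1 - x) + 2 * π * Real.sin (2 * π * x) := by
  have hab : x - 1/2 ≤ (1/2 : ℝ) := by linarith
  set F : ℝ → ℝ := fun t =>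
    4 * π^2 * (raisedCos t * raisedCos (x - t)) + phiD t * phiD (x - t) with hF
  set E : ℝ → ℝ := fun t =>
    4 * π^2 * ((1 + Real.cos (2*π*t)) * (1 + Real.cos (2*π*(x - t)))) +
      (-(2 * π * Real.sin (2*π*t))) * (-(2 * π * Real.sin (2*π*(x - t)))) with hE
  have hstep1 : Kfun x = ∫ t in Set.Icc (x - 1/2) (1/2), F t := by
    rw [Kfun]
    refine (MeasureTheory.setIntegral_eq_integral_of_forall_compl_eq_zero ?_).symm
    intro t ht
    simp only [Set.mem_Icc, not_and_or, not_le] at ht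
    rcases ht with ht | ht
    · -- t < x - 1/2, so x - t > 1/2
      have h2 : ¬ |x - t| ≤ 1/2 := by rw [abs_le]; push_neg; intro; linarith
      simp only [hF, raisedCos_eq_zero h2, phiD_eq_zero h2, mul_zero, add_zero]
    · have h2 : ¬ |t| ≤ 1/2 := by rw [abs_le]; push_neg; intro; linarith
      simp only [hF, raisedCos_eq_zero h2, phiD_eq_zero h2, zero_mul, mul_zero, add_zero]
  have hstep2 : ∫ t in Set.Icc (x - 1/2) (1/2), F t = ∫ t in (x - 1/2)..(1/2), E t := by
    rw [MeasureTheory.integral_Icc_eq_integral_Ioc, ← intervalIntegral.integral_of_le hab]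
    refine intervalIntegral.integral_congr fun t ht => ?_
    rw [Set.uIcc_of_le hab, Set.mem_Icc] at ht
    have ht1 : |t| ≤ 1/2 := by rw [abs_le]; constructor <;> [linarith; linarith]
    have ht2 : |x - t| ≤ 1/2 := by rw [abs_le]; constructor <;> [linarith; linarith]
    simp only [hF, hE, raisedCos, phiD, if_pos ht1, if_pos ht2]
  set A : ℝ → ℝ := fun t =>
    4*π^2*t + 2*π*Real.sin (2*π*t) - 2*π*Real.sin (2*π*(x - t)) +
      π*Real.sin (2*π*t - 2*π*(x - t)) with hA
  have hderiv : ∀ t ∈ Set.uIcc (x - 1/2) (1/2 : ℝ), HasDerivAt A (E t) t := by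
    intro t _
    have d1 : HasDerivAt (fun s : ℝ => 2*π*s) (2*π) t := by
      simpa using (hasDerivAt_id t).const_mul (2*π)
    have d2 : HasDerivAt (fun s : ℝ => 2*π*(x - s)) (-(2*π)) t := by
      have := ((hasDerivAt_const t x).sub (hasDerivAt_id t)).const_mul (2*π)
      simpa using this
    have d3 := d1.sub d2
    have dA : HasDerivAt A
        (4*π^2 + 2*π*(Real.cos (2*π*t) * (2*π)) - 2*π*(Real.cos (2*π*(x - t)) * (-(2*π))) +
          π*(Real.cos (2*π*t - 2*π*(x - t)) * (2*π - -(2*π)))) t := by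
      have p1 : HasDerivAt (fun s : ℝ => 4*π^2*s) (4*π^2) t := by
        simpa using (hasDerivAt_id t).const_mul (4*π^2)
      exact ((p1.add (d1.sin.const_mul (2*π))).sub (d2.sin.const_mul (2*π))).add
        (d3.sin.const_mul π)
    convert dA using 1
    have hcs := Real.cos_sub (2*π*t) (2*π*(x - t))
    simp only [hE]
    nlinarith [hcs]
  have hInt : IntervalIntegrable E MeasureTheory.volume (x - 1/2) (1/2) := by
    refine Continuous.intervalIntegrable ?_ _ _
    have c1 : Continuous fun t : ℝ => 2*π*t := continuous_const.mul continuous_id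
    have c2 : Continuous fun t : ℝ => 2*π*(x - t) :=
      continuous_const.mul (continuous_const.sub continuous_id)
    exact ((continuous_const.mul ((continuous_const.add (Real.continuous_cos.comp c1)).mul
      (continuous_const.add (Real.continuous_cos.comp c2))))).add
      (((continuous_const.mul (Real.continuous_sin.comp c1)).neg).mul
        ((continuous_const.mul (Real.continuous_sin.comp c2)).neg))
  have hstep3 : ∫ t in (x - 1/2)..(1/2), E t = A (1/2) - A (x - 1/2) :=
    intervalIntegral.integral_eq_sub_of_hasDerivAt hderiv hInt
  rw [hstep1, hstep2, hstep3, hA]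
  simp only []
  have e1 : Real.sin (2*π*(1/2 : ℝ)) = 0 := by
    rw [show 2*π*(1/2:ℝ) = π by ring, Real.sin_pi]
  have e2 : Real.sin (2*π*(x - 1/2)) = -Real.sin (2*π*x) := by
    rw [show 2*π*(x - 1/2) = 2*π*x - π by ring, Real.sin_sub, Real.sin_pi, Real.cos_pi]; ring
  have e3 : Real.sin (2*π*(1/2:ℝ) - 2*π*(x - 1/2)) = -Real.sin (2*π*x) := by
    rw [show 2*π*(1/2:ℝ) - 2*π*(x - 1/2) = 2*π - 2*π*x by ring, Real.sin_sub,
      Real.sin_two_pi, Real.cos_two_pi]; ring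
  have e4 : Real.sin (2*π*(x - 1/2) - 2*π*(x - (x - 1/2))) = Real.sin (2*π*x) := by
    rw [show 2*π*(x - 1/2) - 2*π*(x - (x - 1/2)) = 2*π*x - 2*π by ring, Real.sin_sub,
      Real.sin_two_pi, Real.cos_two_pi]; ring
  have e5 : Real.sin (2*π*(x - (x - 1/2))) = 0 := by
    rw [show 2*π*(x - (x - 1/2)) = π by ring, Real.sin_pi]
  rw [e1, e2, e3, e4, e5]
  ring

lemma raisedCos_neg (y : ℝ) : raisedCos (-y) = raisedCos y := by
  unfold raisedCos
  rw [abs_neg]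
  by_cases h : |y| ≤ 1/2
  · rw [if_pos h, if_pos h, show 2*π*(-y) = -(2*π*y) by ring, Real.cos_neg]
  · rw [if_neg h, if_neg h]

lemma phiD_neg (y : ℝ) : phiD (-y) = -phiD y := by
  unfold phiD
  rw [abs_neg]
  by_cases h : |y| ≤ 1/2
  · rw [if_pos h, if_pos h, show 2*π*(-y) = -(2*π*y) by ring, Real.sin_neg]; ring
  · rw [if_neg h, if_neg h]; ring

lemma K_even (x : ℝ) : Kfun (-x) = Kfun x := by
  unfold Kfun
  rw [← MeasureTheory.integral_neg_eq_self]
  congr 1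
  funext t
  have h1 : -x - -t = -(x - t) := by ring
  rw [h1, raisedCos_neg, phiD_neg, raisedCos_neg, phiD_neg]
  ring

lemma K_nonneg_aux {x : ℝ} (h0 : 0 ≤ x) : 0 ≤ Kfun x := by
  by_cases h1 : x ≤ 1
  · rw [K_formula h0 h1]
    have hs : Real.sin (2*π*x) = -Real.sin (2*π*(1 - x)) := by
      rw [show 2*π*(1 - x) = 2*π - 2*π*x by ring, Real.sin_sub, Real.sin_two_pi,
        Real.cos_two_pi]; ring
    rw [hs]
    have hp := Real.pi_pos
    have harg : 0 ≤ 2*π*(1 - x) := by nlinarith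
    have := Real.sin_le harg
    nlinarith
  · have hx : 1 < |x| := by rw [abs_of_nonneg h0]; linarith
    have : Kfun x = 0 := by rw [← K_eq x, (conv_vanish hx).1, (conv_vanish hx).2]; ring
    rw [this]

lemma K_nonneg (x : ℝ) : 0 ≤ Kfun x := by
  rcases le_total 0 x with h | h
  · exact K_nonneg_aux h
  · have he := K_even (-x)
    rw [neg_neg] at he
    rw [he]
    exact K_nonneg_aux (by linarith)

lemma raisedCos_locInt : MeasureTheory.LocallyIntegrable raisedCos MeasureTheory.volume :=
  raisedCos_cont.locallyIntegrable

lemma phiD_locInt : MeasureTheory.LocallyIntegrable phiD MeasureTheory.volume :=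
  phiD_cont.locallyIntegrable

lemma deriv_raisedCosConv :
    deriv raisedCosConv = MeasureTheory.convolution raisedCos phiD
      (ContinuousLinearMap.lsmul ℝ ℝ) MeasureTheory.volume := by
  funext x
  have h := HasCompactSupport.hasDerivAt_convolution_right (ContinuousLinearMap.lsmul ℝ ℝ)
    raisedCos_locInt raisedCos_compactSupport raisedCos_contDiff x
  rw [raisedCos_deriv] at h
  exact h.deriv

lemma deriv2_raisedCosConv : deriv (deriv raisedCosConv) = convD := by
  rw [deriv_raisedCosConv]
  funext x
  have h := HasCompactSupport.hasDerivAt_convolution_left (ContinuousLinearMap.lsmul ℝ ℝ)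
    raisedCos_compactSupport raisedCos_contDiff phiD_locInt x
  rw [raisedCos_deriv] at h
  exact h.deriv

lemma raisedCosConv_cont : Continuous raisedCosConv :=
  raisedCos_compactSupport.continuous_convolution_right _ raisedCos_locInt raisedCos_cont

lemma convD_cont : Continuous convD :=
  phiD_compactSupport.continuous_convolution_right _ phiD_locInt phiD_cont

/-- For `τ > 0`, the function `ψ_τ` is continuous, nonnegative, and its support
is contained in the closed interval `[−√(1+τ), √(1+τ)]`. -/
theorem psiAdm_cont_nonneg_support (τ : ℝ) (hτ : 0 < τ) :
    Continuous (psiAdm τ) ∧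
    (∀ x : ℝ, 0 ≤ psiAdm τ x) ∧
    Function.support (psiAdm τ) ⊆ Set.Icc (-Real.sqrt (1 + τ)) (Real.sqrt (1 + τ)) := by
  have hr : 0 < Real.sqrt (1 + τ) := Real.sqrt_pos.2 (by linarith)
  have hψ : psiAdm τ = fun x =>
      (Real.sqrt (1 + τ))⁻¹ *
        (4 * π ^ 2 * (1 + τ) * raisedCosConv (x / Real.sqrt (1 + τ)) +
          convD (x / Real.sqrt (1 + τ))) := by
    funext x
    rw [psiAdm, deriv2_raisedCosConv]
  refine ⟨?_, ?_, ?_⟩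
  · rw [hψ]
    have hg : Continuous fun x : ℝ => x / Real.sqrt (1 + τ) := continuous_id.div_const _
    exact continuous_const.mul (((continuous_const.mul (raisedCosConv_cont.comp hg))).add
      (convD_cont.comp hg))
  · intro x
    rw [hψ]
    simp only []
    set y := x / Real.sqrt (1 + τ)
    have hK := K_eq y
    have hre : 4 * π ^ 2 * (1 + τ) * raisedCosConv y + convD y
        = Kfun y + 4 * π ^ 2 * τ * raisedCosConv y := by
      rw [← hK]; ring
    rw [hre]
    refine mul_nonneg (inv_nonneg.2 (Real.sqrt_nonneg _)) ?_
    refine add_nonneg (K_nonneg y) (mul_nonneg ?_ (raisedCosConv_nonneg y))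
    positivity
  · intro x hx
    by_contra hmem
    apply hx
    have habs : Real.sqrt (1 + τ) < |x| := by
      simp only [Set.mem_Icc, not_and_or, not_le] at hmem
      rcases hmem with h | h
      · calc Real.sqrt (1 + τ) < -x := by linarith
          _ ≤ |x| := neg_le_abs x
      · exact lt_of_lt_of_le h (le_abs_self x)
    have hy : 1 < |x / Real.sqrt (1 + τ)| := by
      rw [abs_div, abs_of_pos hr]
      exact (one_lt_div hr).2 habs
    rw [hψ]
    simp only []
    rw [(conv_vanish hy).1, (conv_vanish hy).2]
    ring
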